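/- (Step 3 estimate of the parabolic maximum principle.) Let a be a deterministic balanced time-dependent environment with jump range U, let 𝒟 ⊂ ℤ^d × ℤ be finite with parabolic boundary 𝒟^p, and let u : 𝒟 ∪ 𝒟^p → ℝ. Assume ε_a(x,n) > 0 for all (x,n) ∈ 𝒟. Then there is a constant C = C(d) such that for every x ∈ ℤ^d, the Lebesgue measure of χ(Γ⁺,x) := ⋃_{n : (x,n) ∈ Γ⁺} χ(x,n) satisfies |χ(Γ⁺,x)| ≤ C (#U)^d ∑_{n : (x,n) ∈ Γ⁺} ( max(−ℒ_a u(x,n), 0) / ε_a(x,n) )^{d+1}. -/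

import Mathlib

open MeasureTheory

namespace ParabolicMaxStep3

abbrev Zd (d : ℕ) := Fin d → ℤ

/-- A (deterministic) time-dependent environment. -/
abbrev TEnv (d : ℕ) := ℕ → Zd d → Zd d → ℝ

/-- `a` is a balanced time-dependent environment with jump range `U`. -/
def IsBalancedEnv (d : ℕ) (U : Finset (Zd d)) (a : TEnv d) : Prop :=
  ∀ n x, (∀ z ∈ U, 0 < a n x z) ∧ (∀ z, z ∉ U → a n x z = 0) ∧
    (∑ z ∈ U, a n x z = 1) ∧ (∀ i, ∑ z ∈ U, (z i : ℝ) * a n x z = 0)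

/-- The parabolic boundary `𝒟^p`. -/
def pBoundary (d : ℕ) (a : TEnv d) (D : Finset (Zd d × ℕ)) : Set (Zd d × ℕ) :=
  {q | q ∉ D ∧ ∃ x n, (x, n) ∈ D ∧ q.2 = n + 1 ∧ 0 < a n x (q.1 - x)}

/-- The parabolic difference operator `ℒ_a`. -/
def Lop (d : ℕ) (U : Finset (Zd d)) (a : TEnv d) (u : Zd d × ℕ → ℝ) (p : Zd d × ℕ) : ℝ :=
  (∑ z ∈ U, a p.2 p.1 z * u (p.1 + z, p.2 + 1)) - u p

/-- The set `U_{x,n} = {a_n(x,z) z : z ∈ U} ⊂ ℝ^d`. -/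
def Uxn (d : ℕ) (U : Finset (Zd d)) (a : TEnv d) (p : Zd d × ℕ) : Set (Fin d → ℝ) :=
  (fun z : Zd d => fun i => a p.2 p.1 z * (z i : ℝ)) '' (U : Set (Zd d))

/-- `ε_a(x,n) = (a_n(x,0) |conv U_{x,n}| / #U)^{1/(d+1)}`. -/
noncomputable def epsA (d : ℕ) (U : Finset (Zd d)) (a : TEnv d) (p : Zd d × ℕ) : ℝ :=
  (a p.2 p.1 0 * (volume (convexHull ℝ (Uxn d U a p))).toReal / U.card) ^ ((1 : ℝ) / (d + 1))

/-- `I_u(x,n)`. -/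
def Iset (d : ℕ) (a : TEnv d) (D : Finset (Zd d × ℕ)) (u : Zd d × ℕ → ℝ)
    (p : Zd d × ℕ) : Set (Fin d → ℝ) :=
  {q | ∀ r ∈ (D : Set (Zd d × ℕ)) ∪ pBoundary d a D, p.2 < r.2 →
    ∑ i, q i * ((p.1 i - r.1 i : ℤ) : ℝ) ≤ u p - u r}

/-- The upper contact set `Γ⁺` (for the radius `R`). -/
def GammaPlus (d : ℕ) (a : TEnv d) (D : Finset (Zd d × ℕ)) (u : Zd d × ℕ → ℝ) (R : ℝ) :
    Set (Zd d × ℕ) :=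
  {p | p ∈ D ∧ ∃ q ∈ Iset d a D u p,
    R * Real.sqrt (∑ i, q i ^ 2) < u p - ∑ i, q i * (p.1 i : ℝ)}

/-- `χ(x,n) = {(p, q − x·p) : p ∈ I_u(x,n), q ∈ [u(x,n+1), u(x,n)]} ⊂ ℝ^{d+1}`. -/
def chi (d : ℕ) (a : TEnv d) (D : Finset (Zd d × ℕ)) (u : Zd d × ℕ → ℝ)
    (p : Zd d × ℕ) : Set ((Fin d → ℝ) × ℝ) :=
  {w | ∃ q ∈ Iset d a D u p, ∃ s ∈ Set.Icc (u (p.1, p.2 + 1)) (u p),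
    w = (q, s - ∑ i, (p.1 i : ℝ) * q i)}

set_option maxHeartbeats 1000000 in
open Finset in
lemma key {d : ℕ} (U : Finset (Zd d)) (hU : U.Nonempty)
    (a : TEnv d) (ha : IsBalancedEnv d U a)
    (D : Finset (Zd d × ℕ)) (u : Zd d × ℕ → ℝ)
    (p : Zd d × ℕ) (hpD : p ∈ D) (hIne : (Iset d a D u p).Nonempty)
    (heps : 0 < epsA d U a p) :
    volume (chi d a D u p) ≤
      ENNReal.ofReal ((4:ℝ)^d * (U.card:ℝ)^d *
        (max (-(Lop d U a u p)) 0 / epsA d U a p)^(d+1)) := by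
  classical
  obtain ⟨x, n⟩ := p
  obtain ⟨hpos, hzero, hsum1, hbal⟩ := ha n x
  set M : ℝ := max (-(Lop d U a u (x,n))) 0 with hM
  have hM0 : 0 ≤ M := le_max_right _ _
  set N : ℝ := (U.card : ℝ) with hN
  have hN1 : 1 ≤ N := by
    have h1 : (1:ℕ) ≤ U.card := hU.card_pos
    rw [hN]
    exact_mod_cast h1
  have hNpos : 0 < N := lt_of_lt_of_le one_pos hN1
  set v : ℝ := (volume (convexHull ℝ (Uxn d U a (x,n)))).toReal with hv
  have hv0 : 0 ≤ v := ENNReal.toReal_nonneg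
  set ε : ℝ := epsA d U a (x,n) with hε
  have hepsA_eq : ε = (a n x 0 * v / N) ^ ((1:ℝ) / (d + 1)) := rfl
  -- positivity of a₀ and v
  have ht : 0 < a n x 0 * v / N := by
    have ha0 : 0 ≤ a n x 0 := by
      by_cases h0U : (0 : Zd d) ∈ U
      · exact (hpos 0 h0U).le
      · exact le_of_eq (hzero 0 h0U).symm
    rcases lt_or_ge 0 (a n x 0 * v / N) with h | h
    · exact h
    · exfalso
      have h0 : a n x 0 * v / N = 0 := le_antisymm h (by positivity)
      rw [hepsA_eq, h0, Real.zero_rpow (by positivity)] at heps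
      exact lt_irrefl _ heps
  have hav : 0 < a n x 0 * v := by
    rcases (div_pos_iff.mp ht) with ⟨h1, _⟩ | ⟨_, h2⟩
    · exact h1
    · linarith
  have ha0 : 0 < a n x 0 := by nlinarith [hav, hv0]
  have hvpos : 0 < v := by
    rcases lt_or_ge 0 v with h | h
    · exact h
    · nlinarith [hav]
  have h0U : (0 : Zd d) ∈ U := by
    by_contra h0U
    exact ha0.ne' (hzero 0 h0U)
  have hεpos : 0 < ε := heps
  -- neighbors belong to D ∪ ∂ᵖD
  have hmem : ∀ z ∈ U, ((x + z, n + 1) : Zd d × ℕ) ∈ (D : Set (Zd d × ℕ)) ∪ pBoundary d a D := by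
    intro z hz
    by_cases hD : ((x + z, n + 1) : Zd d × ℕ) ∈ D
    · exact Or.inl hD
    · refine Or.inr ⟨hD, x, n, hpD, rfl, ?_⟩
      have hxz : (x + z) - x = z := add_sub_cancel_left x z
      rw [show ((x + z, n + 1) : Zd d × ℕ).1 = x + z from rfl, hxz]
      exact hpos z hz
  -- the basic gradient inequality
  have h1 : ∀ q ∈ Iset d a D u (x,n), ∀ z ∈ U,
      -(∑ i, q i * (z i : ℝ)) ≤ u (x,n) - u (x + z, n + 1) := by
    intro q hq z hz
    have h := hq (x + z, n + 1) (hmem z hz) (by simp)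
    have he : ∑ i, q i * (((x,n).1 i - (x + z, n+1).1 i : ℤ) : ℝ)
        = -(∑ i, q i * (z i : ℝ)) := by
      rw [← Finset.sum_neg_distrib]
      refine Finset.sum_congr rfl fun i _ => ?_
      show q i * ((x i - (x i + z i) : ℤ) : ℝ) = -(q i * (z i : ℝ))
      push_cast
      ring
    rw [he] at h
    exact h
  -- real balance
  have hbalR : ∀ q : Fin d → ℝ, ∑ z ∈ U, a n x z * (∑ i, q i * (z i : ℝ)) = 0 := by
    intro q
    have h1' : ∀ z ∈ U, a n x z * (∑ i, q i * (z i : ℝ))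
        = ∑ i, q i * ((z i : ℝ) * a n x z) := by
      intro z _
      rw [Finset.mul_sum]
      exact Finset.sum_congr rfl fun i _ => by ring
    rw [Finset.sum_congr rfl h1', Finset.sum_comm]
    refine Finset.sum_eq_zero fun i _ => ?_
    rw [← Finset.mul_sum, hbal i, mul_zero]
  obtain ⟨q₀, hq₀⟩ := hIne
  -- -L u as a sum of nonnegative terms
  have hLM : -(Lop d U a u (x,n))
      = ∑ z ∈ U, a n x z * (u (x,n) - u (x + z, n + 1) + ∑ i, q₀ i * (z i : ℝ)) := by
    have expand : ∀ z ∈ U, a n x z * (u (x,n) - u (x + z, n + 1) + ∑ i, q₀ i * (z i : ℝ))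
        = a n x z * u (x,n) - a n x z * u (x + z, n + 1)
          + a n x z * (∑ i, q₀ i * (z i : ℝ)) := fun z _ => by ring
    rw [Finset.sum_congr rfl expand, Finset.sum_add_distrib, Finset.sum_sub_distrib,
      ← Finset.sum_mul, hsum1, hbalR q₀, one_mul, add_zero]
    show -((∑ z ∈ U, a n x z * u (x + z, n + 1)) - u (x,n))
        = u (x,n) - ∑ z ∈ U, a n x z * u (x + z, n + 1)
    ring
  have hterm : ∀ q ∈ Iset d a D u (x,n), ∀ z ∈ U,
      0 ≤ a n x z * (u (x,n) - u (x + z, n + 1) + ∑ i, q i * (z i : ℝ)) := by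
    intro q hq z hz
    have := h1 q hq z hz
    exact mul_nonneg (hpos z hz).le (by linarith)
  have hLnn : 0 ≤ -(Lop d U a u (x,n)) := by
    rw [hLM]
    exact Finset.sum_nonneg (fun z hz => hterm q₀ hq₀ z hz)
  have hMeq : M = -(Lop d U a u (x,n)) := max_eq_left hLnn
  have star : ∀ z ∈ U,
      a n x z * (u (x,n) - u (x + z, n + 1) + ∑ i, q₀ i * (z i : ℝ)) ≤ M := by
    intro z hz
    rw [hMeq, hLM]
    exact Finset.single_le_sum (fun w hw => hterm q₀ hq₀ w hw) hz
  -- length of the interval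
  have hzero_sum : ∀ q : Fin d → ℝ, (∑ i, q i * (((0:Zd d)) i : ℝ)) = 0 := by
    intro q; simp
  have hl0 : 0 ≤ u (x,n) - u (x, n + 1) := by
    have := h1 q₀ hq₀ 0 h0U
    rw [hzero_sum q₀, add_zero x] at this
    linarith
  have hl1 : u (x,n) - u (x, n + 1) ≤ M / a n x 0 := by
    have := star 0 h0U
    rw [hzero_sum q₀, add_zero x, add_zero] at this
    rw [le_div_iff₀ ha0]
    linarith [this]
  -- the pairing bound
  have habs : ∀ q ∈ Iset d a D u (x,n), ∀ z ∈ U,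
      |∑ i, (q₀ i - q i) * (a n x z * (z i : ℝ))| ≤ N * M := by
    intro q hq z hz
    have hpair : ∀ w ∈ U, ∑ i, (q₀ i - q i) * (a n x w * (w i : ℝ))
        = a n x w * ((∑ i, q₀ i * (w i:ℝ)) - ∑ i, q i * (w i:ℝ)) := by
      intro w _
      rw [eq_comm, mul_sub, Finset.mul_sum, Finset.mul_sum, ← Finset.sum_sub_distrib]
      exact Finset.sum_congr rfl fun i _ => by ring
    have hgsum : ∑ w ∈ U, a n x w * ((∑ i, q₀ i * (w i:ℝ)) - ∑ i, q i * (w i:ℝ)) = 0 := by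
      have : ∀ w ∈ U, a n x w * ((∑ i, q₀ i * (w i:ℝ)) - ∑ i, q i * (w i:ℝ))
          = a n x w * (∑ i, q₀ i * (w i:ℝ)) - a n x w * (∑ i, q i * (w i:ℝ)) :=
        fun w _ => by ring
      rw [Finset.sum_congr rfl this, Finset.sum_sub_distrib, hbalR q₀, hbalR q, sub_zero]
    have hup : ∀ w ∈ U, a n x w * ((∑ i, q₀ i * (w i:ℝ)) - ∑ i, q i * (w i:ℝ)) ≤ M := by
      intro w hw
      have h2 := h1 q hq w hw
      have h3 := star w hw
      nlinarith [(hpos w hw).le]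
    rw [hpair z hz]
    rw [abs_le]
    constructor
    · -- lower bound
      have herase : a n x z * ((∑ i, q₀ i * (z i:ℝ)) - ∑ i, q i * (z i:ℝ))
          = -∑ w ∈ U.erase z, a n x w * ((∑ i, q₀ i * (w i:ℝ)) - ∑ i, q i * (w i:ℝ)) := by
        have h5 := Finset.add_sum_erase U
          (fun w => a n x w * ((∑ i, q₀ i * (w i:ℝ)) - ∑ i, q i * (w i:ℝ))) hz
        beta_reduce at h5
        rw [hgsum] at h5
        linarith [h5]
      rw [herase]
      have hcard : ∑ w ∈ U.erase z, a n x w * ((∑ i, q₀ i * (w i:ℝ)) - ∑ i, q i * (w i:ℝ))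
          ≤ (U.erase z).card • M :=
        Finset.sum_le_card_nsmul _ _ M (fun w hw => hup w (Finset.mem_of_mem_erase hw))
      have hcard2 : ((U.erase z).card • M : ℝ) ≤ N * M := by
        rw [nsmul_eq_mul]
        have : ((U.erase z).card : ℝ) ≤ N := by
          rw [hN]
          exact_mod_cast Finset.card_le_card (Finset.erase_subset z U)
        exact mul_le_mul_of_nonneg_right this hM0
      linarith
    · have hMN : M ≤ N * M := by nlinarith
      exact (hup z hz).trans hMN
  -- the vectors y z and the best column choice
  set y : Zd d → (Fin d → ℝ) := fun z i => a n x z * (z i : ℝ) with hy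
  have hUxn : Uxn d U a (x,n) = y '' (U : Set (Zd d)) := rfl
  haveI hne : Nonempty {z // z ∈ U} := ⟨⟨hU.choose, hU.choose_spec⟩⟩
  set mat : (Fin d → {z // z ∈ U}) → Matrix (Fin d) (Fin d) ℝ :=
    fun f => Matrix.of fun i j => y (f j).1 i with hmat
  obtain ⟨f₀, -, hmax⟩ := Finset.exists_max_image Finset.univ
    (fun f => |(mat f).det|) Finset.univ_nonempty
  set A := mat f₀ with hA
  set Δ := |A.det| with hΔdef
  have hΔ0 : 0 ≤ Δ := abs_nonneg _
  -- Δ > 0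
  have hΔpos : 0 < Δ := by
    rcases lt_or_ge 0 Δ with h | h
    · exact h
    · exfalso
      have hall : ∀ f, (mat f).det = 0 := by
        intro f
        have := (hmax f (Finset.mem_univ f)).trans h
        exact abs_eq_zero.mp (le_antisymm this (abs_nonneg _))
      by_cases hW : Submodule.span ℝ (y '' (U : Set (Zd d))) = ⊤
      · obtain ⟨b, hbY, hspanb, hli⟩ := exists_linearIndependent ℝ (y '' (U : Set (Zd d)))
        rw [hW] at hspanb
        have hbfin : b.Finite := Set.Finite.subset ((U.finite_toSet).image y) hbY
        haveI := hbfin.fintype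
        let B : Module.Basis b ℝ (Fin d → ℝ) := Module.Basis.mk hli (by rw [Subtype.range_coe, hspanb])
        have hcard : Fintype.card b = d := by
          have h2 := Module.finrank_eq_card_basis B
          rw [Module.finrank_fin_fun] at h2
          omega
        let e : Fin d ≃ b := (Fintype.equivFinOfCardEq hcard).symm
        have hsel : ∀ j : Fin d, ∃ z : {z // z ∈ U}, y z.1 = ((e j : b) : Fin d → ℝ) := by
          intro j
          obtain ⟨z, hz, hyz⟩ := hbY (e j).2
          exact ⟨⟨z, hz⟩, hyz⟩
        choose g hg using hsel
        have hdet := hall g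
        rw [← Matrix.exists_mulVec_eq_zero_iff] at hdet
        obtain ⟨c, hc0, hcv⟩ := hdet
        have hli2 : LinearIndependent ℝ (fun j : Fin d => ((e j : b) : Fin d → ℝ)) :=
          hli.comp e e.injective
        have hcomb : ∑ j : Fin d, c j • ((e j : b) : Fin d → ℝ) = 0 := by
          funext i
          have h6 := congrFun hcv i
          simp only [hmat, Matrix.mulVec, dotProduct, Matrix.of_apply] at h6
          rw [Finset.sum_apply, Pi.zero_apply]
          calc ∑ j : Fin d, (c j • ((e j : b) : Fin d → ℝ)) i
              = ∑ j : Fin d, y (g j).1 i * c j := by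
                refine Finset.sum_congr rfl fun j _ => ?_
                rw [Pi.smul_apply, smul_eq_mul, ← hg j]
                ring
            _ = 0 := h6
        have := Fintype.linearIndependent_iff.mp hli2 c hcomb
        exact hc0 (funext fun j => this j)
      · have hsub : convexHull ℝ (Uxn d U a (x,n))
            ⊆ (Submodule.span ℝ (y '' (U : Set (Zd d))) : Set (Fin d → ℝ)) :=
          convexHull_min (by rw [hUxn]; exact Submodule.subset_span) (Submodule.convex _)
        have hzero' : volume (convexHull ℝ (Uxn d U a (x,n))) = 0 :=
          measure_mono_null hsub (Measure.addHaar_submodule _ _ hW)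
        rw [hv, hzero'] at hvpos
        simp at hvpos
  have hAd : A.det ≠ 0 := by
    intro h
    rw [hΔdef, h, abs_zero] at hΔpos
    exact lt_irrefl _ hΔpos
  -- Cramer bound on coefficients
  have hcram : ∀ z ∈ U, ∀ j, |A.cramer (y z) j| ≤ Δ := by
    intro z hz j
    rw [Matrix.cramer_apply]
    have hupd : A.updateCol j (y z) = mat (Function.update f₀ j ⟨z, hz⟩) := by
      ext i j'
      rw [Matrix.updateCol_apply]
      by_cases hj : j' = j
      · subst hj
        simp [hmat]
      · simp [hA, hmat, hj, Function.update_of_ne hj]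
    rw [hupd]
    exact hmax _ (Finset.mem_univ _)
  have hIccconv : Convex ℝ (Set.Icc (fun _ => (-1:ℝ)) (fun _ => (1:ℝ)) : Set (Fin d → ℝ)) := by
    rw [← Set.pi_univ_Icc]
    exact convex_pi fun i _ => convex_Icc _ _
  have hrepr : ∀ z ∈ U,
      y z ∈ ⇑(Matrix.toLin' A) '' (Set.Icc (fun _ => (-1:ℝ)) (fun _ => (1:ℝ))) := by
    intro z hz
    refine ⟨(A.det)⁻¹ • A.cramer (y z), ?_, ?_⟩
    · rw [← Set.pi_univ_Icc]
      refine Set.mem_univ_pi.mpr fun j => ?_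
      have habs1 : |((A.det)⁻¹ • A.cramer (y z)) j| ≤ 1 := by
        rw [Pi.smul_apply, smul_eq_mul, abs_mul, abs_inv, ← hΔdef]
        calc Δ⁻¹ * |A.cramer (y z) j| ≤ Δ⁻¹ * Δ :=
              mul_le_mul_of_nonneg_left (hcram z hz j) (inv_nonneg.mpr hΔ0)
          _ = 1 := inv_mul_cancel₀ hΔpos.ne'
      exact Set.mem_Icc.mpr (abs_le.mp habs1)
    · rw [Matrix.toLin'_apply, Matrix.mulVec_smul, Matrix.mulVec_cramer, smul_smul,
        inv_mul_cancel₀ hAd, one_smul]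
  have himg : convexHull ℝ (Uxn d U a (x,n))
      ⊆ ⇑(Matrix.toLin' A) '' (Set.Icc (fun _ => (-1:ℝ)) (fun _ => (1:ℝ))) := by
    apply convexHull_min
    · rw [hUxn]
      rintro _ ⟨z, hz, rfl⟩
      exact hrepr z hz
    · exact hIccconv.linear_image (Matrix.toLin' A)
  have hvle : v ≤ Δ * 2^d := by
    have hb : volume (convexHull ℝ (Uxn d U a (x,n))) ≤ ENNReal.ofReal (Δ * 2^d) := by
      calc volume (convexHull ℝ (Uxn d U a (x,n)))
          ≤ volume (⇑(Matrix.toLin' A) '' (Set.Icc (fun _ => (-1:ℝ)) (fun _ => (1:ℝ)))) :=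
            measure_mono himg
        _ = ENNReal.ofReal |LinearMap.det (Matrix.toLin' A)| *
            volume (Set.Icc (fun _ : Fin d => (-1:ℝ)) (fun _ => (1:ℝ))) :=
            Measure.addHaar_image_linearMap _ _ _
        _ = ENNReal.ofReal Δ * ENNReal.ofReal (2^d) := by
            rw [LinearMap.det_toLin', Real.volume_Icc_pi, ← hΔdef]
            congr 1
            have h2 : ∀ _i : Fin d, ENNReal.ofReal ((1:ℝ) - (-1)) = ENNReal.ofReal 2 := by
              norm_num
            rw [Finset.prod_congr rfl (fun i _ => h2 i), Finset.prod_const,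
              Finset.card_univ, Fintype.card_fin,
              ← ENNReal.ofReal_pow (by norm_num : (0:ℝ) ≤ 2)]
        _ = ENNReal.ofReal (Δ * 2^d) := (ENNReal.ofReal_mul hΔ0).symm
    rw [hv]
    exact ENNReal.toReal_le_of_le_ofReal (mul_nonneg hΔ0 (by positivity)) hb
  have hNM : (0:ℝ) ≤ 2*(N*M) := by nlinarith
  -- Iset is contained in a box preimage
  set c0 : Fin d → ℝ := Matrix.mulVec A.transpose q₀ with hc0def
  have hIsub : Iset d a D u (x,n) ⊆
      ⇑(Matrix.toLin' A.transpose) ⁻¹' Set.Icc (fun j => c0 j - N*M) (fun j => c0 j + N*M) := by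
    intro q hq
    simp only [Set.mem_preimage, Matrix.toLin'_apply]
    have hj : ∀ j, |c0 j - (Matrix.mulVec A.transpose q) j| ≤ N*M := by
      intro j
      have h7 := habs q hq (f₀ j).1 (f₀ j).2
      have he : c0 j - (Matrix.mulVec A.transpose q) j
          = ∑ i, (q₀ i - q i) * (a n x ((f₀ j).1) * (((f₀ j).1) i : ℝ)) := by
        rw [hc0def]
        simp only [Matrix.mulVec, dotProduct, Matrix.transpose_apply]
        rw [← Finset.sum_sub_distrib]
        refine Finset.sum_congr rfl fun i _ => ?_
        simp only [hA, hmat, hy, Matrix.of_apply]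
        ring
      rw [he]
      exact h7
    refine Set.mem_Icc.mpr ⟨Pi.le_def.mpr fun j => ?_, Pi.le_def.mpr fun j => ?_⟩
    · have h8 := (abs_le.mp (hj j)).2
      linarith
    · have h8 := (abs_le.mp (hj j)).1
      linarith
  have hdetT : LinearMap.det (Matrix.toLin' A.transpose) ≠ 0 := by
    rw [LinearMap.det_toLin', Matrix.det_transpose]
    exact hAd
  have hIvol : volume (Iset d a D u (x,n)) ≤ ENNReal.ofReal (Δ⁻¹ * (2*(N*M))^d) := by
    calc volume (Iset d a D u (x,n))
        ≤ volume (⇑(Matrix.toLin' A.transpose) ⁻¹'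
            Set.Icc (fun j => c0 j - N*M) (fun j => c0 j + N*M)) := measure_mono hIsub
      _ = ENNReal.ofReal |(LinearMap.det (Matrix.toLin' A.transpose))⁻¹| *
          volume (Set.Icc (fun j => c0 j - N*M) (fun j => c0 j + N*M)) :=
          Measure.addHaar_preimage_linearMap volume hdetT _
      _ = ENNReal.ofReal Δ⁻¹ * ENNReal.ofReal ((2*(N*M))^d) := by
          rw [Real.volume_Icc_pi]
          congr 1
          · rw [abs_inv, LinearMap.det_toLin', Matrix.det_transpose, ← hΔdef]
          · have h8 : ∀ j : Fin d, ENNReal.ofReal ((c0 j + N*M) - (c0 j - N*M))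
                = ENNReal.ofReal (2*(N*M)) := by
              intro j
              congr 1
              ring
            rw [Finset.prod_congr rfl (fun j _ => h8 j), Finset.prod_const, Finset.card_univ,
              Fintype.card_fin, ← ENNReal.ofReal_pow hNM]
      _ = ENNReal.ofReal (Δ⁻¹ * (2*(N*M))^d) := (ENNReal.ofReal_mul (inv_nonneg.mpr hΔ0)).symm
  -- Iset is closed, chi is measurable
  have hIcl : IsClosed (Iset d a D u (x,n)) := by
    have heq : Iset d a D u (x,n) =
        ⋂ (r : Zd d × ℕ) (_ : r ∈ (D : Set (Zd d × ℕ)) ∪ pBoundary d a D) (_ : n < r.2),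
          {q : Fin d → ℝ | ∑ i, q i * ((x i - r.1 i : ℤ) : ℝ) ≤ u (x,n) - u r} := by
      ext q
      simp only [Iset, Set.mem_setOf_eq, Set.mem_iInter]
    rw [heq]
    refine isClosed_iInter fun r => isClosed_iInter fun _ => isClosed_iInter fun _ => ?_
    exact isClosed_le (continuous_finset_sum _ fun i _ =>
      (continuous_apply i).mul continuous_const) continuous_const
  have hImeas : MeasurableSet (Iset d a D u (x,n)) := hIcl.measurableSet
  have hchieq : chi d a D u (x,n) = {w : (Fin d → ℝ) × ℝ |
      w.1 ∈ Iset d a D u (x,n) ∧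
      w.2 + ∑ i, (x i : ℝ) * w.1 i ∈ Set.Icc (u (x, n+1)) (u (x,n))} := by
    ext ⟨q, t⟩
    simp only [chi, Set.mem_setOf_eq, Prod.mk.injEq, Set.mem_Icc]
    constructor
    · rintro ⟨q', hq', s, hs, rfl, rfl⟩
      refine ⟨hq', ?_, ?_⟩ <;> simp <;> [exact hs.1; exact hs.2]
    · rintro ⟨hq, h1', h2'⟩
      exact ⟨q, hq, t + ∑ i, (x i : ℝ) * q i, ⟨h1', h2'⟩, rfl, by ring⟩
  have hchim : MeasurableSet (chi d a D u (x,n)) := by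
    rw [hchieq]
    have heq2 : {w : (Fin d → ℝ) × ℝ |
        w.1 ∈ Iset d a D u (x,n) ∧
        w.2 + ∑ i, (x i : ℝ) * w.1 i ∈ Set.Icc (u (x, n+1)) (u (x,n))}
        = (Prod.fst ⁻¹' Iset d a D u (x,n)) ∩
          ((fun w : (Fin d → ℝ) × ℝ => w.2 + ∑ i, (x i : ℝ) * w.1 i) ⁻¹'
            Set.Icc (u (x, n+1)) (u (x,n))) := rfl
    rw [heq2]
    refine (hImeas.preimage measurable_fst).inter (measurableSet_Icc.preimage ?_)
    exact measurable_snd.add (Finset.measurable_sum Finset.univ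
      fun i _ => ((measurable_pi_apply i).comp measurable_fst).const_mul _)
  have hslice : ∀ q : Fin d → ℝ, volume (Prod.mk q ⁻¹' chi d a D u (x,n))
      = Set.indicator (Iset d a D u (x,n))
          (fun _ => ENNReal.ofReal (u (x,n) - u (x, n+1))) q := by
    intro q
    by_cases hq : q ∈ Iset d a D u (x,n)
    · have hpre : Prod.mk q ⁻¹' chi d a D u (x,n)
          = Set.Icc (u (x,n+1) - ∑ i, (x i:ℝ) * q i) (u (x,n) - ∑ i, (x i:ℝ) * q i) := by
        ext t
        rw [hchieq]
        simp only [Set.mem_preimage, Set.mem_setOf_eq, Set.mem_Icc]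
        constructor
        · rintro ⟨-, h1', h2'⟩
          constructor <;> linarith
        · rintro ⟨h1', h2'⟩
          exact ⟨hq, by linarith, by linarith⟩
      rw [hpre, Real.volume_Icc, Set.indicator_of_mem hq]
      congr 1
      ring
    · have hpre : Prod.mk q ⁻¹' chi d a D u (x,n) = ∅ := by
        ext t
        rw [hchieq]
        simp [hq]
      rw [hpre, Set.indicator_of_notMem hq, measure_empty]
  have hchivol : volume (chi d a D u (x,n))
      = ENNReal.ofReal (u (x,n) - u (x, n+1)) * volume (Iset d a D u (x,n)) := by
    rw [Measure.volume_eq_prod, Measure.prod_apply hchim]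
    rw [lintegral_congr hslice, lintegral_indicator hImeas, setLIntegral_const]
  -- put everything together
  have hofReal3 : volume (chi d a D u (x,n)) ≤
      ENNReal.ofReal ((M / a n x 0) * (Δ⁻¹ * (2*(N*M))^d)) := by
    rw [hchivol]
    calc ENNReal.ofReal (u (x,n) - u (x,n+1)) * volume (Iset d a D u (x,n))
        ≤ ENNReal.ofReal (M / a n x 0) * ENNReal.ofReal (Δ⁻¹ * (2*(N*M))^d) :=
          mul_le_mul' (ENNReal.ofReal_le_ofReal hl1) hIvol
      _ = ENNReal.ofReal ((M / a n x 0) * (Δ⁻¹ * (2*(N*M))^d)) :=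
          (ENNReal.ofReal_mul (div_nonneg hM0 ha0.le)).symm
  refine hofReal3.trans (ENNReal.ofReal_le_ofReal ?_)
  -- the remaining real arithmetic
  have h9 : ((1:ℝ)/((d:ℝ)+1)) * ((d+1 : ℕ) : ℝ) = 1 := by
    push_cast
    field_simp
  have hεpow : ε ^ (d+1) = a n x 0 * v / N := by
    rw [hepsA_eq, ← Real.rpow_natCast ((a n x 0 * v / N) ^ ((1:ℝ)/((d:ℝ)+1))) (d+1),
      ← Real.rpow_mul ht.le, h9, Real.rpow_one]
  have hMexp : (M / ε)^(d+1) = M^(d+1) * N / (a n x 0 * v) := by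
    rw [div_pow, hεpow, div_div_eq_mul_div]
  have h10 : v / 2^d ≤ Δ := (div_le_iff₀ (by positivity)).mpr (by linarith [hvle])
  have hΔinv : Δ⁻¹ ≤ 2^d / v := by
    have h11 := inv_anti₀ (by positivity : (0:ℝ) < v / 2^d) h10
    rwa [inv_div] at h11
  rw [hMexp]
  have hstep1 : M / a n x 0 * (Δ⁻¹ * (2*(N*M))^d)
      ≤ M / a n x 0 * ((2^d/v) * (2*(N*M))^d) := by
    have h12 := mul_le_mul_of_nonneg_right hΔinv (pow_nonneg hNM d)
    exact mul_le_mul_of_nonneg_left h12 (div_nonneg hM0 ha0.le)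
  refine hstep1.trans ?_
  have hexp : M / a n x 0 * ((2^d/v) * (2*(N*M))^d)
      = (4:ℝ)^d * N^d * (M^(d+1) / (a n x 0 * v)) := by
    have h44 : (4:ℝ)^d = 2^d * 2^d := by
      rw [← mul_pow]
      norm_num
    rw [mul_pow, mul_pow, h44, pow_succ, div_eq_mul_inv, div_eq_mul_inv, div_eq_mul_inv,
      mul_inv]
    ring
  rw [hexp]
  have hfin : M^(d+1) / (a n x 0 * v) ≤ M^(d+1) * N / (a n x 0 * v) := by
    have hnum : M^(d+1) ≤ M^(d+1) * N := le_mul_of_one_le_right (pow_nonneg hM0 _) hN1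
    gcongr
  exact mul_le_mul_of_nonneg_left hfin
    (mul_nonneg (by positivity) (pow_nonneg hNpos.le d))

/-- **Step 3 estimate of the parabolic maximum principle.**
There is `C = C(d)` such that, for every `x`, the Lebesgue measure of
`χ(Γ⁺,x) = ⋃_{n : (x,n) ∈ Γ⁺} χ(x,n)` is at most
`C (#U)^d ∑_{n : (x,n) ∈ Γ⁺} (max(−ℒ_a u(x,n), 0) / ε_a(x,n))^{d+1}`. -/
theorem step3_chi_measure_bound (d : ℕ) (hd : 1 ≤ d) :
    ∃ C : ℝ, 0 < C ∧
      ∀ (U : Finset (Zd d)), U.Nonempty →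
      ∀ (a : TEnv d), IsBalancedEnv d U a →
      ∀ (D : Finset (Zd d × ℕ)) (u : Zd d × ℕ → ℝ) (R T : ℝ), 0 < R → 0 < T →
      (∀ q ∈ (D : Set (Zd d × ℕ)) ∪ pBoundary d a D,
        Real.sqrt (∑ i, (q.1 i : ℝ) ^ 2) ≤ R ∧ (q.2 : ℝ) ≤ T) →
      (∀ p ∈ D, 0 < epsA d U a p) →
      ∀ x : Zd d,
        (volume (⋃ p ∈ {q ∈ GammaPlus d a D u R | q.1 = x}, chi d a D u p)).toReal ≤
          C * (U.card : ℝ) ^ d *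
            ∑ q ∈ D, Set.indicator {r | r.1 = x ∧ r ∈ GammaPlus d a D u R}
              (fun r => (max (-(Lop d U a u r)) 0 / epsA d U a r) ^ (d + 1)) q := by
  classical
  refine ⟨(4:ℝ)^d, by positivity, ?_⟩
  intro U hU a ha D u R T hR hT hbound hepsA x
  set S : Set (Zd d × ℕ) := {r | r.1 = x ∧ r ∈ GammaPlus d a D u R} with hS
  set F : Finset (Zd d × ℕ) := D.filter (fun q => q ∈ S) with hF
  set f : Zd d × ℕ → ℝ := fun r => (max (-(Lop d U a u r)) 0 / epsA d U a r) ^ (d + 1) with hf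
  have hsub : (⋃ p ∈ {q ∈ GammaPlus d a D u R | q.1 = x}, chi d a D u p)
      ⊆ ⋃ p ∈ F, chi d a D u p := by
    refine Set.iUnion₂_subset fun p hp => ?_
    have hpF : p ∈ F := by
      rcases hp with ⟨hpG, hpx⟩
      exact Finset.mem_filter.mpr ⟨hpG.1, ⟨hpx, hpG⟩⟩
    exact Set.subset_iUnion₂ (s := fun p (_ : p ∈ F) => chi d a D u p) p hpF
  have hchain : volume (⋃ p ∈ {q ∈ GammaPlus d a D u R | q.1 = x}, chi d a D u p)
      ≤ ENNReal.ofReal (∑ q ∈ F, (4:ℝ)^d * (U.card:ℝ)^d * f q) := by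
    refine (measure_mono hsub).trans ((measure_biUnion_finset_le F _).trans ?_)
    rw [ENNReal.ofReal_sum_of_nonneg]
    · refine Finset.sum_le_sum fun q hq => ?_
      have hqD : q ∈ D := (Finset.mem_filter.mp hq).1
      have hqS : q ∈ S := (Finset.mem_filter.mp hq).2
      obtain ⟨qv, hqv, -⟩ := hqS.2.2
      exact key U hU a ha D u q hqD ⟨qv, hqv⟩ (hepsA q hqD)
    · intro q hq
      have hqD : q ∈ D := (Finset.mem_filter.mp hq).1
      have hεq := hepsA q hqD
      have h0 : 0 ≤ max (-(Lop d U a u q)) 0 / epsA d U a q :=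
        div_nonneg (le_max_right _ _) hεq.le
      exact mul_nonneg (mul_nonneg (by positivity) (by positivity)) (pow_nonneg h0 _)
  have hnonneg : ∀ q ∈ F, (0:ℝ) ≤ (4:ℝ)^d * (U.card:ℝ)^d * f q := by
    intro q hq
    have hqD : q ∈ D := (Finset.mem_filter.mp hq).1
    have hεq := hepsA q hqD
    have h0 : 0 ≤ max (-(Lop d U a u q)) 0 / epsA d U a q :=
      div_nonneg (le_max_right _ _) hεq.le
    exact mul_nonneg (mul_nonneg (by positivity) (by positivity)) (pow_nonneg h0 _)
  have hto := ENNReal.toReal_le_of_le_ofReal (Finset.sum_nonneg hnonneg) hchain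
  refine hto.trans (le_of_eq ?_)
  rw [← Finset.mul_sum]
  have hind : ∑ q ∈ F, f q = ∑ q ∈ D, Set.indicator S f q := by
    rw [hF, Finset.sum_filter]
    refine (Finset.sum_congr rfl fun q _ => ?_).symm
    simp [Set.indicator_apply]
  rw [hind]


end ParabolicMaxStep3
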